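/- arXiv:2509.12109 — 9 statements merged into one kernel-verified Lean document; each statement's English description precedes it below -/
import Mathlib

section
/- Let V be a type, and let 𝒫 be a finite family (a Finset) of pairwise disjoint, nonempty finite subsets of V. For a finite subset T of V, let L(T) denote the number of members of 𝒫 that are contained in T. Then for every nonempty finite subset S of V, the derivative at τ = 1 of the real polynomial function τ ↦ ∑_{T ⊆ S} (−1)^{|S|−|T|} · τ^{L(T)} equals 1 if S is a member of 𝒫, and equals 0 otherwise. -/
lemma aux_neg_pow {V : Type*} [DecidableEq V] (x : Finset V) :
    ∑ U ∈ x.powerset, (-1 : ℝ) ^ (x.card - U.card) = if x = ∅ then 1 else 0 := by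
  have h : ∀ U ∈ x.powerset, (-1:ℝ) ^ (x.card - U.card) = (-1)^x.card * (-1)^U.card := by
    intro U hU
    have hle : U.card ≤ x.card := Finset.card_le_card (Finset.mem_powerset.mp hU)
    have hx : x.card = (x.card - U.card) + U.card := by omega
    rw [hx, pow_add, mul_assoc, ← pow_add, ← two_mul, pow_mul, neg_one_sq, one_pow, mul_one]
    congr 1
    omega
  rw [Finset.sum_congr rfl h, ← Finset.mul_sum]
  have := @Finset.sum_powerset_neg_one_pow_card V _ x
  have h2 : ∑ U ∈ x.powerset, (-1:ℝ)^U.card = if x = ∅ then 1 else 0 := by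
    exact_mod_cast congrArg (Int.cast : ℤ → ℝ) this
  rw [h2]
  split <;> simp_all

lemma aux_sum {V : Type*} [DecidableEq V] (P S : Finset V) :
    ∑ T ∈ S.powerset, (if P ⊆ T then (-1 : ℝ) ^ (S.card - T.card) else 0)
      = if P = S then 1 else 0 := by
  rw [Finset.sum_ite, Finset.sum_const_zero, add_zero]
  by_cases hPS : P ⊆ S
  · have hbij : ∑ T ∈ (S.powerset.filter fun T => P ⊆ T), (-1:ℝ)^(S.card - T.card)
        = ∑ U ∈ (S \ P).powerset, (-1:ℝ)^((S \ P).card - U.card) := by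
      refine Finset.sum_nbij' (fun T => T \ P) (fun U => U ∪ P) ?_ ?_ ?_ ?_ ?_
      · intro T hT
        simp only [Finset.mem_filter, Finset.mem_powerset] at hT ⊢
        exact Finset.sdiff_subset_sdiff hT.1 le_rfl
      · intro U hU
        simp only [Finset.mem_filter, Finset.mem_powerset] at hU ⊢
        exact ⟨Finset.union_subset (hU.trans Finset.sdiff_subset) hPS,
          Finset.subset_union_right⟩
      · intro T hT
        simp only [Finset.mem_filter, Finset.mem_powerset] at hT
        exact Finset.sdiff_union_of_subset hT.2
      · intro U hU
        simp only [Finset.mem_powerset] at hU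
        have hd : Disjoint U P := Finset.sdiff_disjoint.mono_left hU
        exact Finset.union_sdiff_cancel_right hd
      · intro T hT
        simp only [Finset.mem_filter, Finset.mem_powerset] at hT
        show (-1:ℝ)^(S.card - T.card) = (-1:ℝ)^((S \ P).card - (T \ P).card)
        congr 1
        have h1 : (T \ P).card = T.card - P.card := Finset.card_sdiff_of_subset hT.2
        have h2 : (S \ P).card = S.card - P.card := Finset.card_sdiff_of_subset hPS
        have h3 : P.card ≤ T.card := Finset.card_le_card hT.2
        have h4 : T.card ≤ S.card := Finset.card_le_card hT.1
        omega
    rw [hbij, aux_neg_pow]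
    by_cases h : P = S
    · simp [h]
    · rw [if_neg h, if_neg]
      intro hc
      rw [Finset.sdiff_eq_empty_iff_subset] at hc
      exact h (Finset.Subset.antisymm hPS hc)
  · rw [if_neg (fun h : P = S => hPS (h ▸ Finset.Subset.refl P)), Finset.filter_false_of_mem, Finset.sum_empty]
    intro T hT
    simp only [Finset.mem_powerset] at hT
    exact fun hc => hPS (hc.trans hT)


/-- The alternating-sum polynomial indicator for cluster surfaces:
for a family `Ps` of pairwise disjoint nonempty finite subsets of `V`,
with `L T` the number of members of `Ps` contained in `T`,
the derivative at `τ = 1` of `τ ↦ ∑_{T ⊆ S} (−1)^{|S|−|T|} τ^{L T}`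
is `1` if `S ∈ Ps` and `0` otherwise. -/
theorem stmt0 {V : Type*} [DecidableEq V] (Ps : Finset (Finset V))
    (hdisj : (Ps : Set (Finset V)).Pairwise fun P Q => Disjoint P Q)
    (hne : ∀ P ∈ Ps, P.Nonempty)
    (S : Finset V) (hS : S.Nonempty) :
    deriv (fun τ : ℝ => ∑ T ∈ S.powerset,
        (-1 : ℝ) ^ (S.card - T.card) * τ ^ ((Ps.filter fun P => P ⊆ T).card)) 1
      = if S ∈ Ps then 1 else 0 := by
  rw [deriv_fun_sum (fun T _ => by fun_prop)]
  have hterm : ∀ T ∈ S.powerset,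
      deriv (fun τ : ℝ => (-1 : ℝ) ^ (S.card - T.card) * τ ^ ((Ps.filter fun P => P ⊆ T).card)) 1
        = (-1 : ℝ) ^ (S.card - T.card) * ((Ps.filter fun P => P ⊆ T).card : ℝ) := by
    intro T _
    rw [deriv_const_mul _ (by fun_prop)]
    simp
  rw [Finset.sum_congr rfl hterm]
  have hcard : ∀ T : Finset V, ((Ps.filter fun P => P ⊆ T).card : ℝ)
      = ∑ P ∈ Ps, if P ⊆ T then (1:ℝ) else 0 := by
    intro T
    rw [Finset.sum_ite, Finset.sum_const_zero, add_zero, Finset.sum_const]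
    simp
  simp only [hcard, Finset.mul_sum]
  rw [Finset.sum_comm]
  have : ∀ P ∈ Ps, ∑ T ∈ S.powerset,
      (-1:ℝ)^(S.card - T.card) * (if P ⊆ T then (1:ℝ) else 0)
      = if P = S then 1 else 0 := by
    intro P _
    rw [← aux_sum P S]
    exact Finset.sum_congr rfl fun T _ => by split <;> simp
  rw [Finset.sum_congr rfl this, Finset.sum_ite_eq' Ps S (fun _ => (1:ℝ))]
end

section
/- Let V be a type, C a finite index set of configurations with weights w : C → ℝ satisfying w(c) ≥ 0 for all c and ∑_{c ∈ C} w(c) = 1, and for each c ∈ C let 𝒫_c be a finite family of pairwise disjoint, nonempty finite subsets of V, with L_c(T) denoting the number of members of 𝒫_c contained in T. Then for every nonempty finite subset S of V, the derivative at τ = 1 of the function τ ↦ ∑_{c ∈ C} w(c) · ∑_{T ⊆ S} (−1)^{|S|−|T|} · τ^{L_c(T)} equals ∑_{c ∈ C, S ∈ 𝒫_c} w(c), i.e. the total weight of configurations in which S is a member of 𝒫_c (the 'hit chance' of S). -/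
open Finset

/-- Real version of the alternating powerset sum. -/
lemma aux_sum_neg_one {α : Type*} [DecidableEq α] (s : Finset α) :
    (∑ U ∈ s.powerset, (-1 : ℝ) ^ (s.card - U.card)) = if s = ∅ then 1 else 0 := by
  have h : ∀ U ∈ s.powerset, (-1 : ℝ) ^ (s.card - U.card)
      = (-1 : ℝ) ^ s.card * (-1 : ℝ) ^ U.card := by
    intro U hU
    rw [mem_powerset] at hU
    have hle : U.card ≤ s.card := card_le_card hU
    have : (-1 : ℝ) ^ (s.card - U.card) * (-1 : ℝ) ^ U.card = (-1 : ℝ) ^ s.card := by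
      rw [← pow_add, Nat.sub_add_cancel hle]
    calc (-1 : ℝ) ^ (s.card - U.card)
        = (-1 : ℝ) ^ (s.card - U.card) * ((-1 : ℝ) ^ U.card * (-1 : ℝ) ^ U.card) := by
          rw [← pow_add, ← two_mul, pow_mul]; norm_num
      _ = (-1 : ℝ) ^ s.card * (-1 : ℝ) ^ U.card := by rw [← mul_assoc, this]
  rw [Finset.sum_congr rfl h, ← Finset.mul_sum]
  have := Finset.sum_powerset_neg_one_pow_card (x := s)
  have h2 : (∑ m ∈ s.powerset, (-1 : ℝ) ^ m.card) = if s = ∅ then 1 else 0 := by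
    exact_mod_cast congrArg (Int.cast : ℤ → ℝ) this
  rw [h2]
  split_ifs with hs
  · subst hs; simp
  · simp

/-- Inner Möbius-type identity. -/
lemma aux_inner {V : Type*} [DecidableEq V] (S P : Finset V) :
    (∑ T ∈ S.powerset, (-1 : ℝ) ^ (S.card - T.card) * (if P ⊆ T then 1 else 0))
      = if P = S then 1 else 0 := by
  simp_rw [mul_ite, mul_one, mul_zero]
  rw [← Finset.sum_filter]
  by_cases hPS : P ⊆ S
  · -- bijection T ↦ T \ P with (S \ P).powerset
    have hbij : (∑ T ∈ S.powerset.filter (fun T => P ⊆ T), (-1 : ℝ) ^ (S.card - T.card))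
        = ∑ U ∈ (S \ P).powerset, (-1 : ℝ) ^ ((S \ P).card - U.card) := by
      apply Finset.sum_nbij' (i := fun T => T \ P) (j := fun U => U ∪ P)
      · intro T hT
        simp only [mem_filter, mem_powerset] at hT
        exact mem_powerset.2 (sdiff_subset_sdiff hT.1 le_rfl)
      · intro U hU
        simp only [mem_powerset] at hU
        simp only [mem_filter, mem_powerset]
        constructor
        · exact union_subset (hU.trans (sdiff_subset)) hPS
        · exact subset_union_right
      · intro T hT
        simp only [mem_filter, mem_powerset] at hT
        exact sdiff_union_of_subset hT.2
      · intro U hU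
        simp only [mem_powerset] at hU
        have : Disjoint U P := disjoint_of_subset_left hU sdiff_disjoint
        rw [union_sdiff_right, sdiff_eq_self_of_disjoint this]
      · intro T hT
        simp only [mem_filter, mem_powerset] at hT
        congr 1
        have h1 : (T \ P).card = T.card - P.card := card_sdiff_of_subset hT.2
        have h2 : (S \ P).card = S.card - P.card := card_sdiff_of_subset hPS
        have hc1 : P.card ≤ T.card := card_le_card hT.2
        have hc2 : T.card ≤ S.card := card_le_card hT.1
        omega
    rw [hbij, aux_sum_neg_one]
    have : S \ P = ∅ ↔ P = S := by
      rw [sdiff_eq_empty_iff_subset]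
      exact ⟨fun h => subset_antisymm hPS h, fun h => h ▸ le_rfl⟩
    simp only [this]
  · rw [Finset.filter_false_of_mem, Finset.sum_empty]
    · rw [if_neg]; rintro rfl; exact hPS le_rfl
    · intro T hT hPT
      exact hPS (hPT.trans (mem_powerset.1 hT))

/-- Key combinatorial identity. -/
lemma aux_key {V : Type*} [DecidableEq V] (Ps : Finset (Finset V)) (S : Finset V) :
    (∑ T ∈ S.powerset, (-1 : ℝ) ^ (S.card - T.card) * ((Ps.filter fun P => P ⊆ T).card : ℝ))
      = if S ∈ Ps then 1 else 0 := by
  have h : ∀ T : Finset V, ((Ps.filter fun P => P ⊆ T).card : ℝ)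
      = ∑ P ∈ Ps, (if P ⊆ T then (1 : ℝ) else 0) := by
    intro T
    rw [Finset.sum_boole]
  simp_rw [h, Finset.mul_sum]
  rw [Finset.sum_comm]
  have h2 : ∀ P ∈ Ps, (∑ T ∈ S.powerset, (-1 : ℝ) ^ (S.card - T.card) * (if P ⊆ T then 1 else 0))
      = if P = S then 1 else 0 := fun P _ => aux_inner S P
  rw [Finset.sum_congr rfl h2]
  simp [Finset.sum_ite_eq']

/-- Weighted ensemble version: the derivative at `τ = 1` of the weighted
alternating sum equals the total weight of configurations in which `S` is a
cluster surface (the "hit chance" of `S`). -/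
theorem stmt1 {V : Type*} [DecidableEq V] {C : Type*} [Fintype C] [DecidableEq C]
    (w : C → ℝ) (hw : ∀ c, 0 ≤ w c) (hw1 : ∑ c, w c = 1)
    (Ps : C → Finset (Finset V))
    (hdisj : ∀ c, ((Ps c : Set (Finset V))).Pairwise fun P Q => Disjoint P Q)
    (hne : ∀ c, ∀ P ∈ Ps c, P.Nonempty)
    (S : Finset V) (hS : S.Nonempty) :
    deriv (fun τ : ℝ => ∑ c, w c * ∑ T ∈ S.powerset,
        (-1 : ℝ) ^ (S.card - T.card) * τ ^ (((Ps c).filter fun P => P ⊆ T).card)) 1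
      = ∑ c ∈ Finset.univ.filter (fun c => S ∈ Ps c), w c := by
  have hd : HasDerivAt (fun τ : ℝ => ∑ c, w c * ∑ T ∈ S.powerset,
        (-1 : ℝ) ^ (S.card - T.card) * τ ^ (((Ps c).filter fun P => P ⊆ T).card))
      (∑ c, w c * ∑ T ∈ S.powerset,
        (-1 : ℝ) ^ (S.card - T.card) * ((((Ps c).filter fun P => P ⊆ T).card : ℝ))) 1 := by
    apply HasDerivAt.fun_sum
    intro c _
    apply HasDerivAt.const_mul
    apply HasDerivAt.fun_sum
    intro T _
    have := (hasDerivAt_pow (((Ps c).filter fun P => P ⊆ T).card) (1 : ℝ)).const_mul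
      ((-1 : ℝ) ^ (S.card - T.card))
    simpa using this
  rw [hd.deriv]
  have : ∀ c : C, (∑ T ∈ S.powerset,
      (-1 : ℝ) ^ (S.card - T.card) * ((((Ps c).filter fun P => P ⊆ T).card : ℝ)))
      = if S ∈ Ps c then 1 else 0 := fun c => aux_key (Ps c) S
  simp_rw [this, Finset.sum_filter, mul_ite, mul_one, mul_zero]
end

section
/- Let ι be a type, S a finite subset of ι with |S| ≥ 2, and F : Finset ι → ℝ → ℝ a family of real functions such that for every finite A ⊆ ι, the function F(A) is differentiable at 1 and F(A)(1) = 1. Then the derivative at τ = 1 of the function τ ↦ ∑_{T ⊆ S} (−1)^{|S|−|T|} · F(T)(τ) · ∏_{i ∈ S \ T} F({i})(τ) equals the derivative at τ = 1 of the function τ ↦ ∑_{T ⊆ S} (−1)^{|S|−|T|} · F(T)(τ). -/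
private lemma neg_one_pow_sub_real {a b : ℕ} (h : b ≤ a) :
    (-1 : ℝ) ^ (a - b) = (-1) ^ a * (-1) ^ b := by
  have : (-1 : ℝ) ^ a = (-1) ^ (a - b) * (-1) ^ b := by
    rw [← pow_add, Nat.sub_add_cancel h]
  rw [this, mul_assoc, ← pow_add, ← two_mul, pow_mul]
  norm_num

/-- Replacing the subtraction of `1` by subtraction of one-point expectation
factors does not change the derivative at `τ = 1` of the alternating sum. -/
theorem stmt2 {ι : Type*} [DecidableEq ι] (S : Finset ι) (hS : 2 ≤ S.card)
    (F : Finset ι → ℝ → ℝ)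
    (hdiff : ∀ A : Finset ι, DifferentiableAt ℝ (F A) 1)
    (hone : ∀ A : Finset ι, F A 1 = 1) :
    deriv (fun τ : ℝ => ∑ T ∈ S.powerset,
        (-1 : ℝ) ^ (S.card - T.card) * F T τ * ∏ i ∈ S \ T, F {i} τ) 1
      = deriv (fun τ : ℝ => ∑ T ∈ S.powerset,
        (-1 : ℝ) ^ (S.card - T.card) * F T τ) 1 := by
  set d : Finset ι → ℝ := fun A => deriv (F A) 1 with hd
  -- derivative of the product factor
  have hprod : ∀ T : Finset ι,
      HasDerivAt (fun τ : ℝ => ∏ i ∈ S \ T, F {i} τ) (∑ i ∈ S \ T, d {i}) 1 := by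
    intro T
    have := HasDerivAt.fun_finsetProd (u := S \ T) (f := fun i τ => F {i} τ)
      (f' := fun i => d {i}) (x := (1:ℝ)) (fun i _ => (hdiff {i}).hasDerivAt)
    simpa [hone] using this
  have hL : ∀ T ∈ S.powerset, HasDerivAt
      (fun τ : ℝ => (-1 : ℝ) ^ (S.card - T.card) * F T τ * ∏ i ∈ S \ T, F {i} τ)
      ((-1 : ℝ) ^ (S.card - T.card) * (d T + ∑ i ∈ S \ T, d {i})) 1 := by
    intro T _
    have h1 : HasDerivAt (fun τ : ℝ => (-1 : ℝ) ^ (S.card - T.card) * F T τ)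
        ((-1 : ℝ) ^ (S.card - T.card) * d T) 1 := (hdiff T).hasDerivAt.const_mul _
    have := h1.mul (hprod T)
    have hP1 : (∏ i ∈ S \ T, F {i} 1) = 1 := by simp [hone]
    simpa [hP1, hone, mul_add, Pi.mul_def] using this
  have hR : ∀ T ∈ S.powerset, HasDerivAt
      (fun τ : ℝ => (-1 : ℝ) ^ (S.card - T.card) * F T τ)
      ((-1 : ℝ) ^ (S.card - T.card) * d T) 1 := fun T _ => (hdiff T).hasDerivAt.const_mul _
  rw [(HasDerivAt.fun_sum hL).deriv, (HasDerivAt.fun_sum hR).deriv]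
  -- reduce to the combinatorial identity
  have key : ∑ T ∈ S.powerset, (-1 : ℝ) ^ (S.card - T.card) * ∑ i ∈ S \ T, d {i} = 0 := by
    have swap : ∑ T ∈ S.powerset, ∑ i ∈ S \ T, (-1 : ℝ) ^ (S.card - T.card) * d {i}
        = ∑ i ∈ S, ∑ T ∈ (S.erase i).powerset, (-1 : ℝ) ^ (S.card - T.card) * d {i} := by
      refine Finset.sum_comm' ?_
      intro T i
      simp only [Finset.mem_powerset, Finset.mem_sdiff, Finset.subset_erase]
      tauto
    calc ∑ T ∈ S.powerset, (-1 : ℝ) ^ (S.card - T.card) * ∑ i ∈ S \ T, d {i}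
        = ∑ T ∈ S.powerset, ∑ i ∈ S \ T, (-1 : ℝ) ^ (S.card - T.card) * d {i} := by
          simp [Finset.mul_sum]
      _ = ∑ i ∈ S, ∑ T ∈ (S.erase i).powerset, (-1 : ℝ) ^ (S.card - T.card) * d {i} := swap
      _ = 0 := by
          refine Finset.sum_eq_zero fun i hi => ?_
          have hne : (S.erase i).Nonempty := by
            rw [← Finset.card_pos, Finset.card_erase_of_mem hi]; omega
          have hz : (∑ T ∈ (S.erase i).powerset, (-1 : ℝ) ^ T.card) = 0 := by
            exact_mod_cast Finset.sum_powerset_neg_one_pow_card_of_nonempty hne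
          calc ∑ T ∈ (S.erase i).powerset, (-1 : ℝ) ^ (S.card - T.card) * d {i}
              = ((-1 : ℝ) ^ S.card * d {i}) * ∑ T ∈ (S.erase i).powerset, (-1 : ℝ) ^ T.card := by
                rw [Finset.mul_sum]
                refine Finset.sum_congr rfl fun T hT => ?_
                have hTS : T.card ≤ S.card := by
                  have := Finset.card_le_card (Finset.mem_powerset.mp hT)
                  have := Finset.card_erase_of_mem hi
                  omega
                rw [neg_one_pow_sub_real hTS]; ring
            _ = 0 := by rw [hz, mul_zero]
  calc ∑ T ∈ S.powerset, (-1 : ℝ) ^ (S.card - T.card) * (d T + ∑ i ∈ S \ T, d {i})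
      = (∑ T ∈ S.powerset, (-1 : ℝ) ^ (S.card - T.card) * d T)
        + ∑ T ∈ S.powerset, (-1 : ℝ) ^ (S.card - T.card) * ∑ i ∈ S \ T, d {i} := by
        rw [← Finset.sum_add_distrib]; simp [mul_add]
    _ = ∑ T ∈ S.powerset, (-1 : ℝ) ^ (S.card - T.card) * d T := by rw [key, add_zero]
end

section
/- Let ι be a type, R a commutative ring, T a finite subset of ι, E a subset of ι (with decidable membership), and F : Finset ι → R a function satisfying F(U) = F(U ∩ E) · F(U \ E) for every U ⊆ T. Then ∑_{U ⊆ T} (−1)^{|T|−|U|} F(U) = (∑_{A ⊆ T ∩ E} (−1)^{|T ∩ E|−|A|} F(A)) · (∑_{B ⊆ T \ E} (−1)^{|T \ E|−|B|} F(B)). -/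
/-- If a correlation functional `F` is multiplicative across the two-block
partition given by `E` and its complement, the alternating sum over subsets of
`T` factorizes into the product of the alternating sums over `T ∩ E` and
`T \ E`. -/
theorem stmt3 {ι : Type*} [DecidableEq ι] {R : Type*} [CommRing R]
    (T : Finset ι) (E : Set ι) [DecidablePred (· ∈ E)]
    (F : Finset ι → R)
    (hF : ∀ U ⊆ T, F U = F (U.filter (· ∈ E)) * F (U.filter (· ∉ E))) :
    ∑ U ∈ T.powerset, (-1 : R) ^ (T.card - U.card) * F U
      = (∑ A ∈ (T.filter (· ∈ E)).powerset,
          (-1 : R) ^ ((T.filter (· ∈ E)).card - A.card) * F A)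
      * (∑ B ∈ (T.filter (· ∉ E)).powerset,
          (-1 : R) ^ ((T.filter (· ∉ E)).card - B.card) * F B) := by
  classical
  rw [Finset.sum_mul_sum, ← Finset.sum_product']
  refine Finset.sum_nbij' (fun U => (U.filter (· ∈ E), U.filter (· ∉ E)))
    (fun p => p.1 ∪ p.2) ?_ ?_ ?_ ?_ ?_
  · intro U hU
    rw [Finset.mem_powerset] at hU
    simp only [Finset.mem_product, Finset.mem_powerset]
    exact ⟨Finset.filter_subset_filter _ hU, Finset.filter_subset_filter _ hU⟩
  · rintro ⟨A, B⟩ hp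
    simp only [Finset.mem_product, Finset.mem_powerset] at hp ⊢
    exact Finset.union_subset (hp.1.trans (Finset.filter_subset _ _))
      (hp.2.trans (Finset.filter_subset _ _))
  · intro U hU
    simp [Finset.filter_union_filter_not_eq]
  · rintro ⟨A, B⟩ hp
    simp only [Finset.mem_product, Finset.mem_powerset] at hp
    have hA : ∀ x ∈ A, x ∈ E := fun x hx =>
      (Finset.mem_filter.mp (hp.1 hx)).2
    have hB : ∀ x ∈ B, x ∉ E := fun x hx =>
      (Finset.mem_filter.mp (hp.2 hx)).2
    have h1 : (A ∪ B).filter (· ∈ E) = A := by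
      rw [Finset.filter_union, Finset.filter_true_of_mem hA,
        Finset.filter_false_of_mem hB, Finset.union_empty]
    have h2 : (A ∪ B).filter (· ∉ E) = B := by
      rw [Finset.filter_union, Finset.filter_false_of_mem (fun x hx h => h (hA x hx)),
        Finset.filter_true_of_mem hB, Finset.empty_union]
    simp [h1, h2]
  · intro U hU
    rw [Finset.mem_powerset] at hU
    have hcard : ∀ S : Finset ι,
        (S.filter (· ∈ E)).card + (S.filter (· ∉ E)).card = S.card := fun S =>
      Finset.card_filter_add_card_filter_not _
    have ha : (U.filter (· ∈ E)).card ≤ (T.filter (· ∈ E)).card :=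
      Finset.card_le_card (Finset.filter_subset_filter _ hU)
    have hb : (U.filter (· ∉ E)).card ≤ (T.filter (· ∉ E)).card :=
      Finset.card_le_card (Finset.filter_subset_filter _ hU)
    have hexp : T.card - U.card
        = ((T.filter (· ∈ E)).card - (U.filter (· ∈ E)).card)
          + ((T.filter (· ∉ E)).card - (U.filter (· ∉ E)).card) := by
      have := hcard T; have := hcard U; omega
    rw [hF U hU, hexp, pow_add]
    ring
end

section
/- Let ι be a type, E a subset of ι (with decidable membership), and F : Finset ι → ℝ → ℝ a family of real functions such that for every finite U ⊆ ι: F(U) is differentiable at 1, F(U)(1) = 1, and F(U)(τ) = F(U ∩ E)(τ) · F(U \ E)(τ) for all τ. Then for every finite subset T of ι such that both T ∩ E and T \ E are nonempty, the derivative at τ = 1 of the function τ ↦ ∑_{U ⊆ T} (−1)^{|T|−|U|} F(U)(τ) equals 0. -/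
/-- Mixed-parity vanishing: if `F` equals `1` at `τ = 1`, is differentiable
there, and factorizes across the partition `E` / `Eᶜ`, then for `T` meeting
both blocks the derivative at `τ = 1` of the alternating sum vanishes. -/
theorem stmt4 {ι : Type*} [DecidableEq ι] (E : Set ι) [DecidablePred (· ∈ E)]
    (F : Finset ι → ℝ → ℝ)
    (hdiff : ∀ U : Finset ι, DifferentiableAt ℝ (F U) 1)
    (hone : ∀ U : Finset ι, F U 1 = 1)
    (hmul : ∀ (U : Finset ι) (τ : ℝ),
      F U τ = F (U.filter (· ∈ E)) τ * F (U.filter (· ∉ E)) τ)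
    (T : Finset ι)
    (h1 : (T.filter (· ∈ E)).Nonempty) (h2 : (T.filter (· ∉ E)).Nonempty) :
    deriv (fun τ : ℝ => ∑ U ∈ T.powerset,
        (-1 : ℝ) ^ (T.card - U.card) * F U τ) 1 = 0 := by
  classical
  set A := T.filter (· ∈ E) with hA
  set B := T.filter (· ∉ E) with hB
  -- derivative splits as sum of parity derivatives
  have hd : ∀ U : Finset ι,
      deriv (F U) 1 = deriv (F (U.filter (· ∈ E))) 1 + deriv (F (U.filter (· ∉ E))) 1 := by
    intro U
    have : F U = fun τ => F (U.filter (· ∈ E)) τ * F (U.filter (· ∉ E)) τ :=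
      funext fun τ => hmul U τ
    rw [this, deriv_fun_mul (hdiff _) (hdiff _), hone, hone, mul_one, one_mul]
  -- swap deriv and sum
  have hds : deriv (fun τ : ℝ => ∑ U ∈ T.powerset,
      (-1 : ℝ) ^ (T.card - U.card) * F U τ) 1
      = ∑ U ∈ T.powerset, (-1 : ℝ) ^ (T.card - U.card) * deriv (F U) 1 := by
    rw [deriv_fun_sum fun U _ => ((hdiff U).const_mul _)]
    exact Finset.sum_congr rfl fun U _ => deriv_const_mul _ (hdiff U)
  rw [hds]
  -- reindex over pairs of subsets of A, B
  have hTcard : T.card = A.card + B.card :=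
    (Finset.card_filter_add_card_filter_not (s := T) (p := (· ∈ E))).symm
  have hre : ∑ U ∈ T.powerset, (-1 : ℝ) ^ (T.card - U.card) * deriv (F U) 1
      = ∑ p ∈ A.powerset ×ˢ B.powerset,
          ((-1 : ℝ) ^ (A.card - p.1.card) * (-1 : ℝ) ^ (B.card - p.2.card)) *
            (deriv (F p.1) 1 + deriv (F p.2) 1) := by
    refine Finset.sum_nbij' (fun U => (U.filter (· ∈ E), U.filter (· ∉ E)))
      (fun p => p.1 ∪ p.2) ?_ ?_ ?_ ?_ ?_
    · intro U hU
      rw [Finset.mem_powerset] at hU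
      simp only [Finset.mem_product, Finset.mem_powerset, hA, hB]
      exact ⟨Finset.filter_subset_filter _ hU, Finset.filter_subset_filter _ hU⟩
    · intro p hp
      rw [Finset.mem_product, Finset.mem_powerset, Finset.mem_powerset] at hp
      rw [Finset.mem_powerset]
      exact Finset.union_subset (hp.1.trans (Finset.filter_subset _ _))
        (hp.2.trans (Finset.filter_subset _ _))
    · intro U _
      exact Finset.filter_union_filter_not_eq _ U
    · intro p hp
      rw [Finset.mem_product, Finset.mem_powerset, Finset.mem_powerset] at hp
      have e1 : p.1.filter (· ∈ E) = p.1 :=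
        Finset.filter_true_of_mem fun x hx => (Finset.mem_filter.1 (hp.1 hx)).2
      have e2 : p.2.filter (· ∈ E) = ∅ :=
        Finset.filter_false_of_mem fun x hx => (Finset.mem_filter.1 (hp.2 hx)).2
      have f1 : p.1.filter (· ∉ E) = ∅ :=
        Finset.filter_false_of_mem fun x hx h => h (Finset.mem_filter.1 (hp.1 hx)).2
      have f2 : p.2.filter (· ∉ E) = p.2 :=
        Finset.filter_true_of_mem fun x hx => (Finset.mem_filter.1 (hp.2 hx)).2
      ext <;> simp [Finset.filter_union, e1, e2, f1, f2]
    · intro U hU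
      rw [Finset.mem_powerset] at hU
      have hUc : U.card = (U.filter (· ∈ E)).card + (U.filter (· ∉ E)).card :=
        (Finset.card_filter_add_card_filter_not (s := U) (p := (· ∈ E))).symm
      have hac : (U.filter (· ∈ E)).card ≤ A.card :=
        Finset.card_le_card (Finset.filter_subset_filter _ hU)
      have hbc : (U.filter (· ∉ E)).card ≤ B.card :=
        Finset.card_le_card (Finset.filter_subset_filter _ hU)
      dsimp only
      rw [hd U, ← pow_add]
      congr 2
      omega
  rw [hre]
  simp only [mul_add, Finset.sum_add_distrib]
  rw [Finset.sum_product, Finset.sum_product]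
  have hBzero : ∑ b ∈ B.powerset, (-1 : ℝ) ^ (B.card - b.card) = 0 := by
    have := Finset.sum_powerset_neg_one_pow_card_of_nonempty (x := B) h2
    have h' : ∑ b ∈ B.powerset, (-1 : ℝ) ^ b.card = 0 := by
      exact_mod_cast congrArg (Int.cast : ℤ → ℝ) this
    calc ∑ b ∈ B.powerset, (-1 : ℝ) ^ (B.card - b.card)
        = ∑ b ∈ B.powerset, (-1 : ℝ) ^ B.card * (-1 : ℝ) ^ b.card := by
          refine Finset.sum_congr rfl fun b hb => ?_
          have hle : b.card ≤ B.card :=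
            Finset.card_le_card (Finset.mem_powerset.1 hb)
          have : (-1 : ℝ) ^ (B.card - b.card) * (-1 : ℝ) ^ b.card = (-1 : ℝ) ^ B.card := by
            rw [← pow_add]; congr 1; omega
          have hb2 : ((-1 : ℝ) ^ b.card) * ((-1 : ℝ) ^ b.card) = 1 := by
            rw [← pow_add]; exact Even.neg_one_pow ⟨b.card, by ring⟩
          calc (-1 : ℝ) ^ (B.card - b.card)
              = (-1 : ℝ) ^ (B.card - b.card) * (((-1 : ℝ) ^ b.card) * ((-1 : ℝ) ^ b.card)) := by
                rw [hb2, mul_one]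
            _ = (-1 : ℝ) ^ B.card * (-1 : ℝ) ^ b.card := by rw [← mul_assoc, this]
      _ = (-1 : ℝ) ^ B.card * ∑ b ∈ B.powerset, (-1 : ℝ) ^ b.card := by
          rw [Finset.mul_sum]
      _ = 0 := by rw [h', mul_zero]
  have hAzero : ∑ a ∈ A.powerset, (-1 : ℝ) ^ (A.card - a.card) = 0 := by
    have := Finset.sum_powerset_neg_one_pow_card_of_nonempty (x := A) h1
    have h' : ∑ a ∈ A.powerset, (-1 : ℝ) ^ a.card = 0 := by
      exact_mod_cast congrArg (Int.cast : ℤ → ℝ) this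
    calc ∑ a ∈ A.powerset, (-1 : ℝ) ^ (A.card - a.card)
        = ∑ a ∈ A.powerset, (-1 : ℝ) ^ A.card * (-1 : ℝ) ^ a.card := by
          refine Finset.sum_congr rfl fun a ha => ?_
          have hle : a.card ≤ A.card :=
            Finset.card_le_card (Finset.mem_powerset.1 ha)
          have hb2 : ((-1 : ℝ) ^ a.card) * ((-1 : ℝ) ^ a.card) = 1 := by
            rw [← pow_add]; exact Even.neg_one_pow ⟨a.card, by ring⟩
          have this2 : (-1 : ℝ) ^ (A.card - a.card) * (-1 : ℝ) ^ a.card = (-1 : ℝ) ^ A.card := by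
            rw [← pow_add]; congr 1; omega
          calc (-1 : ℝ) ^ (A.card - a.card)
              = (-1 : ℝ) ^ (A.card - a.card) * (((-1 : ℝ) ^ a.card) * ((-1 : ℝ) ^ a.card)) := by
                rw [hb2, mul_one]
            _ = (-1 : ℝ) ^ A.card * (-1 : ℝ) ^ a.card := by rw [← mul_assoc, this2]
      _ = (-1 : ℝ) ^ A.card * ∑ a ∈ A.powerset, (-1 : ℝ) ^ a.card := by
          rw [Finset.mul_sum]
      _ = 0 := by rw [h', mul_zero]
  have t1 : ∑ a ∈ A.powerset, ∑ b ∈ B.powerset,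
      ((-1 : ℝ) ^ (A.card - a.card) * (-1 : ℝ) ^ (B.card - b.card)) * deriv (F a) 1 = 0 := by
    refine Finset.sum_eq_zero fun a _ => ?_
    have : ∑ b ∈ B.powerset,
        ((-1 : ℝ) ^ (A.card - a.card) * (-1 : ℝ) ^ (B.card - b.card)) * deriv (F a) 1
        = ((-1 : ℝ) ^ (A.card - a.card) * deriv (F a) 1) *
          ∑ b ∈ B.powerset, (-1 : ℝ) ^ (B.card - b.card) := by
      rw [Finset.mul_sum]; exact Finset.sum_congr rfl fun b _ => by ring
    rw [this, hBzero, mul_zero]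
  have t2 : ∑ a ∈ A.powerset, ∑ b ∈ B.powerset,
      ((-1 : ℝ) ^ (A.card - a.card) * (-1 : ℝ) ^ (B.card - b.card)) * deriv (F b) 1 = 0 := by
    have : ∀ a ∈ A.powerset, ∑ b ∈ B.powerset,
        ((-1 : ℝ) ^ (A.card - a.card) * (-1 : ℝ) ^ (B.card - b.card)) * deriv (F b) 1
        = (-1 : ℝ) ^ (A.card - a.card) *
          ∑ b ∈ B.powerset, (-1 : ℝ) ^ (B.card - b.card) * deriv (F b) 1 := by
      intro a _
      rw [Finset.mul_sum]; exact Finset.sum_congr rfl fun b _ => by ring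
    rw [Finset.sum_congr rfl this, ← Finset.sum_mul, hAzero, zero_mul]
  rw [t1, t2, add_zero]
end

section
/- Let ι be a type, S a finite subset of ι, and F : Finset (ι × Bool) → ℝ → ℝ a family of real functions such that for every finite U ⊆ ι × Bool: F(U) is differentiable at 1, F(U)(1) = 1, and F(U)(τ) = F(U ∩ (ι × {false}))(τ) · F(U ∩ (ι × {true}))(τ) for all τ. For b : ι → Bool let S_b denote the image of S under the map i ↦ (i, b(i)), and let g(T)(τ) = ∑_{U ⊆ T} (−1)^{|T|−|U|} F(U)(τ). Then the derivative at τ = 1 of τ ↦ ∑_{b : ι → Bool with b constant outside S, summed over all functions b : S → Bool} g(S_b)(τ) equals the derivative at τ = 1 of g(S_{false})(τ) plus the derivative at τ = 1 of g(S_{true})(τ), where S_{false} and S_{true} are the images of S under i ↦ (i, false) and i ↦ (i, true) respectively. -/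
open Finset

lemma aux_neg_one_pow_sub (m n : ℕ) (h : n ≤ m) :
    (-1 : ℝ) ^ (m - n) = (-1) ^ m * (-1) ^ n := by
  have h2 : (-1 : ℝ) ^ n * (-1) ^ n = 1 := by
    rw [← pow_add]; exact Even.neg_one_pow ⟨n, rfl⟩
  calc (-1 : ℝ) ^ (m - n) = (-1) ^ (m - n) * ((-1) ^ n * (-1) ^ n) := by rw [h2, mul_one]
    _ = (-1) ^ (m - n + n) * (-1) ^ n := by rw [pow_add]; ring
    _ = (-1) ^ m * (-1) ^ n := by rw [Nat.sub_add_cancel h]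

lemma aux_sum_sign {α : Type*} [DecidableEq α] (Y : Finset α) :
    ∑ C ∈ Y.powerset, (-1 : ℝ) ^ (Y.card - C.card) = if Y = ∅ then 1 else 0 := by
  have h1 : ∀ C ∈ Y.powerset, (-1 : ℝ) ^ (Y.card - C.card) = (-1) ^ Y.card * (-1) ^ C.card := by
    intro C hC
    exact aux_neg_one_pow_sub _ _ (card_le_card (mem_powerset.1 hC))
  rw [Finset.sum_congr rfl h1, ← Finset.mul_sum]
  have h2 : ∑ C ∈ Y.powerset, (-1 : ℝ) ^ C.card
      = ((∑ C ∈ Y.powerset, (-1 : ℤ) ^ C.card : ℤ) : ℝ) := by push_cast; rfl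
  rw [h2, Finset.sum_powerset_neg_one_pow_card]
  by_cases h : Y = ∅ <;> simp [h]

lemma aux_sum_powerset_union {α : Type*} [DecidableEq α] (t s : Finset α)
    (hd : Disjoint s t) (G : Finset α → ℝ) :
    ∑ A ∈ (s ∪ t).powerset, G A = ∑ B ∈ s.powerset, ∑ C ∈ t.powerset, G (B ∪ C) := by
  classical
  induction t using Finset.induction_on generalizing G with
  | empty => simp
  | @insert a t ha ih =>
    have has : a ∉ s := fun h => (Finset.disjoint_right.1 hd (Finset.mem_insert_self a t)) h
    have hd' : Disjoint s t := hd.mono_right (Finset.subset_insert _ _)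
    have haut : a ∉ s ∪ t := by simp [has, ha]
    rw [Finset.union_insert, Finset.sum_powerset_insert haut, ih hd' G, ih hd' (fun A => G (insert a A))]
    rw [← Finset.sum_add_distrib]
    refine Finset.sum_congr rfl fun B hB => ?_
    have key := Finset.sum_powerset_insert ha (fun C => G (B ∪ C))
    rw [key]
    congr 1
    exact Finset.sum_congr rfl fun C _ => by rw [Finset.union_insert]

lemma aux_sum_powerset_map {α β : Type*} [DecidableEq α] [DecidableEq β]
    (e : α ↪ β) (s : Finset α) (G : Finset β → ℝ) :
    ∑ U ∈ (s.map e).powerset, G U = ∑ A ∈ s.powerset, G (A.map e) := by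
  classical
  induction s using Finset.induction_on generalizing G with
  | empty => simp
  | @insert a s ha ih =>
    rw [Finset.map_insert, Finset.sum_powerset_insert ha,
      Finset.sum_powerset_insert (by simp [ha] : e a ∉ s.map e), ih G,
      ih (fun U => G (insert (e a) U))]
    congr 1
    exact Finset.sum_congr rfl fun A hA => by rw [Finset.map_insert]

lemma aux_vanish {α : Type*} [DecidableEq α] (X Y : Finset α) (hd : Disjoint X Y)
    (h : Finset α → ℝ) :
    ∑ A ∈ (X ∪ Y).powerset, (-1 : ℝ) ^ ((X ∪ Y).card - A.card) * h (A ∩ X)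
      = (if Y = ∅ then (1 : ℝ) else 0)
        * ∑ B ∈ X.powerset, (-1 : ℝ) ^ (X.card - B.card) * h B := by
  rw [aux_sum_powerset_union Y X hd]
  have key : ∀ B ∈ X.powerset, ∀ C ∈ Y.powerset,
      (-1 : ℝ) ^ ((X ∪ Y).card - (B ∪ C).card) * h ((B ∪ C) ∩ X)
        = ((-1 : ℝ) ^ (X.card - B.card) * h B) * (-1 : ℝ) ^ (Y.card - C.card) := by
    intro B hB C hC
    have hBX : B ⊆ X := mem_powerset.1 hB
    have hCY : C ⊆ Y := mem_powerset.1 hC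
    have hBC : Disjoint B C := hd.mono hBX hCY
    have hCX : Disjoint C X := Finset.disjoint_left.2 fun a haC haX =>
      (Finset.disjoint_left.1 hd haX) (hCY haC)
    have hint : (B ∪ C) ∩ X = B := by
      rw [Finset.union_inter_distrib_right, Finset.inter_eq_left.2 hBX,
        Finset.disjoint_iff_inter_eq_empty.1 hCX, Finset.union_empty]
    have hcards : (X ∪ Y).card - (B ∪ C).card = (X.card - B.card) + (Y.card - C.card) := by
      rw [Finset.card_union_of_disjoint hd, Finset.card_union_of_disjoint hBC]
      have h1 := Finset.card_le_card hBX
      have h2 := Finset.card_le_card hCY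
      omega
    rw [hint, hcards, pow_add]
    ring
  calc ∑ B ∈ X.powerset, ∑ C ∈ Y.powerset,
        (-1 : ℝ) ^ ((X ∪ Y).card - (B ∪ C).card) * h ((B ∪ C) ∩ X)
      = ∑ B ∈ X.powerset, ((-1 : ℝ) ^ (X.card - B.card) * h B)
          * ∑ C ∈ Y.powerset, (-1 : ℝ) ^ (Y.card - C.card) := by
        refine Finset.sum_congr rfl fun B hB => ?_
        rw [Finset.mul_sum]
        exact Finset.sum_congr rfl fun C hC => key B hB C hC
    _ = (if Y = ∅ then (1 : ℝ) else 0) * ∑ B ∈ X.powerset, (-1 : ℝ) ^ (X.card - B.card) * h B := by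
        rw [aux_sum_sign, ← Finset.sum_mul]
        ring

lemma aux_vanish_filter {α : Type*} [DecidableEq α] (s : Finset α) (q : α → Prop)
    [DecidablePred q] (h : Finset α → ℝ) :
    ∑ A ∈ s.powerset, (-1 : ℝ) ^ (s.card - A.card) * h (A.filter q)
      = (if (s.filter fun i => ¬ q i) = ∅ then (1 : ℝ) else 0)
        * ∑ B ∈ (s.filter q).powerset,
            (-1 : ℝ) ^ ((s.filter q).card - B.card) * h B := by
  classical
  have hd : Disjoint (s.filter q) (s.filter fun i => ¬ q i) :=
    Finset.disjoint_filter_filter_not s s q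
  have hus : s.filter q ∪ (s.filter fun i => ¬ q i) = s :=
    Finset.filter_union_filter_not_eq q s
  have hAX : ∀ A ∈ s.powerset, A ∩ s.filter q = A.filter q := by
    intro A hA
    have hAs := Finset.mem_powerset.1 hA
    ext a
    simp only [Finset.mem_inter, Finset.mem_filter]
    exact ⟨fun ⟨h1, _, h3⟩ => ⟨h1, h3⟩, fun ⟨h1, h2⟩ => ⟨h1, hAs h1, h2⟩⟩
  calc ∑ A ∈ s.powerset, (-1 : ℝ) ^ (s.card - A.card) * h (A.filter q)
      = ∑ A ∈ (s.filter q ∪ (s.filter fun i => ¬ q i)).powerset,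
          (-1 : ℝ) ^ ((s.filter q ∪ (s.filter fun i => ¬ q i)).card - A.card)
            * h (A ∩ s.filter q) := by
        rw [hus]
        exact Finset.sum_congr rfl fun A hA => by rw [hAX A hA]
    _ = _ := aux_vanish _ _ hd h

/-- Parity separation: summing the alternating correlation sum `g` over all
choices of one parity per site, only the all-even and all-odd terms contribute
to the derivative at `τ = 1`. -/
theorem stmt5 {ι : Type*} [DecidableEq ι] (S : Finset ι)
    (F : Finset (ι × Bool) → ℝ → ℝ)
    (hdiff : ∀ U : Finset (ι × Bool), DifferentiableAt ℝ (F U) 1)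
    (hone : ∀ U : Finset (ι × Bool), F U 1 = 1)
    (hmul : ∀ (U : Finset (ι × Bool)) (τ : ℝ),
      F U τ = F (U.filter fun p => p.2 = false) τ * F (U.filter fun p => p.2 = true) τ)
    (g : Finset (ι × Bool) → ℝ → ℝ)
    (hg : ∀ (T : Finset (ι × Bool)) (τ : ℝ),
      g T τ = ∑ U ∈ T.powerset, (-1 : ℝ) ^ (T.card - U.card) * F U τ) :
    deriv (fun τ : ℝ => ∑ b : {x // x ∈ S} → Bool,
        g (S.attach.image fun i : {x // x ∈ S} => (i.1, b i)) τ) 1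
      = deriv (g (S.image fun i => (i, false))) 1
        + deriv (g (S.image fun i => (i, true))) 1 := by
  classical
  set f : Finset (ι × Bool) → ℝ := fun U => deriv (F U) 1 with hfdef
  -- additivity of the derivative across the parity split
  have hf : ∀ U : Finset (ι × Bool),
      f U = f (U.filter fun p => p.2 = false) + f (U.filter fun p => p.2 = true) := by
    intro U
    have h1 := (hdiff (U.filter fun p => p.2 = false)).hasDerivAt
    have h2 := (hdiff (U.filter fun p => p.2 = true)).hasDerivAt
    have h3 := h1.mul h2
    have hFU : F U = fun τ => F (U.filter fun p => p.2 = false) τ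
        * F (U.filter fun p => p.2 = true) τ := funext fun τ => hmul U τ
    rw [show F (U.filter fun p => p.2 = false) * F (U.filter fun p => p.2 = true) = F U from hFU.symm] at h3
    have h4 := h3.deriv
    simp only [hfdef]
    rw [h4, hone, hone]
    ring
  -- derivative of g
  set D : Finset (ι × Bool) → ℝ :=
    fun T => ∑ U ∈ T.powerset, (-1 : ℝ) ^ (T.card - U.card) * f U with hDdef
  have hD : ∀ T : Finset (ι × Bool), HasDerivAt (g T) (D T) 1 := by
    intro T
    have hfun : g T = fun τ => ∑ U ∈ T.powerset, (-1 : ℝ) ^ (T.card - U.card) * F U τ :=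
      funext (hg T)
    rw [hfun, hDdef]
    exact HasDerivAt.fun_sum fun U _ => (hdiff U).hasDerivAt.const_mul _
  have hsum : HasDerivAt (fun τ : ℝ => ∑ b : {x // x ∈ S} → Bool,
      g (S.attach.image fun i : {x // x ∈ S} => (i.1, b i)) τ)
      (∑ b : {x // x ∈ S} → Bool,
        D (S.attach.image fun i : {x // x ∈ S} => (i.1, b i))) 1 :=
    HasDerivAt.fun_sum fun b _ => hD _
  rw [hsum.deriv, (hD _).deriv, (hD _).deriv]
  -- now pure combinatorics
  set e : ({x // x ∈ S} → Bool) → ({x // x ∈ S} ↪ ι × Bool) := fun b =>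
    ⟨fun i => (i.1, b i), fun i j hij => Subtype.ext (congrArg Prod.fst hij)⟩ with hedef
  have himg : ∀ b : {x // x ∈ S} → Bool,
      (S.attach.image fun i : {x // x ∈ S} => (i.1, b i)) = S.attach.map (e b) :=
    fun b => (Finset.map_eq_image (e b) S.attach).symm
  have himgc : ∀ c : Bool, (S.image fun i => (i, c)) = S.attach.map (e fun _ => c) := by
    intro c
    ext p
    simp only [Finset.mem_image, Finset.mem_map, hedef, Function.Embedding.coeFn_mk,
      Finset.mem_attach, true_and, Subtype.exists]
    constructor
    · rintro ⟨i, hi, rfl⟩; exact ⟨i, hi, rfl⟩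
    · rintro ⟨i, hi, rfl⟩; exact ⟨i, hi, rfl⟩
  -- reindexing D along the embeddings
  have hDmap : ∀ b : {x // x ∈ S} → Bool, D (S.attach.map (e b))
      = ∑ A ∈ S.attach.powerset,
          (-1 : ℝ) ^ (S.attach.card - A.card) * f (A.map (e b)) := by
    intro b
    simp only [hDdef]
    rw [aux_sum_powerset_map (e b) S.attach
      (fun U => (-1 : ℝ) ^ ((S.attach.map (e b)).card - U.card) * f U)]
    simp only [Finset.card_map]
  -- the filter of a mapped set
  have hfilt : ∀ (b : {x // x ∈ S} → Bool) (c : Bool) (A : Finset {x // x ∈ S}),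
      (A.map (e b)).filter (fun p => p.2 = c)
        = (A.filter fun i => b i = c).map (e fun _ => c) := by
    intro b c A
    ext p
    simp only [Finset.mem_filter, Finset.mem_map, hedef, Function.Embedding.coeFn_mk]
    constructor
    · rintro ⟨⟨i, hi, rfl⟩, hc⟩
      have hbi : b i = c := hc
      exact ⟨i, ⟨hi, hbi⟩, Prod.ext rfl hbi.symm⟩
    · rintro ⟨i, ⟨hiA, hbi⟩, rfl⟩
      exact ⟨⟨i, hiA, Prod.ext rfl hbi⟩, rfl⟩
  -- per-b expansion
  have hsplit : ∀ (b : {x // x ∈ S} → Bool) (A : Finset {x // x ∈ S}),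
      f (A.map (e b))
        = f ((A.filter fun i => b i = false).map (e fun _ => false))
          + f ((A.filter fun i => b i = true).map (e fun _ => true)) := by
    intro b A
    rw [hf (A.map (e b)), hfilt b false A, hfilt b true A]
  -- indicator lemma for each parity
  have hind : ∀ (b : {x // x ∈ S} → Bool) (c : Bool),
      (if (S.attach.filter fun i => ¬ b i = c) = ∅ then (1 : ℝ) else 0)
        * ∑ B ∈ (S.attach.filter fun i => b i = c).powerset,
            (-1 : ℝ) ^ ((S.attach.filter fun i => b i = c).card - B.card)
              * f (B.map (e fun _ => c))
        = if b = (fun _ => c) then D (S.attach.map (e fun _ => c)) else 0 := by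
    intro b c
    by_cases hb : b = fun _ => c
    · subst hb
      have h1 : (S.attach.filter fun i : {x // x ∈ S} => ¬ (c = c)) = ∅ := by simp
      have h2 : (S.attach.filter fun i : {x // x ∈ S} => (c = c)) = S.attach :=
        Finset.filter_true_of_mem fun _ _ => rfl
      rw [h1, h2, if_pos rfl, if_pos rfl, one_mul, hDmap]
    · rw [if_neg hb]
      have hex : ∃ i, b i ≠ c := by
        by_contra hcon
        push_neg at hcon
        exact hb (funext fun i => hcon i)
      obtain ⟨i, hi⟩ := hex
      have hne : (S.attach.filter fun i => ¬ b i = c) ≠ ∅ :=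
        Finset.ne_empty_of_mem (Finset.mem_filter.2 ⟨Finset.mem_attach _ i, hi⟩)
      rw [if_neg hne, zero_mul]
  -- per-b value of D
  have hDb : ∀ b : {x // x ∈ S} → Bool,
      D (S.attach.map (e b))
        = (if b = (fun _ => false) then D (S.attach.map (e fun _ => false)) else 0)
          + (if b = (fun _ => true) then D (S.attach.map (e fun _ => true)) else 0) := by
    intro b
    rw [hDmap b]
    calc ∑ A ∈ S.attach.powerset, (-1 : ℝ) ^ (S.attach.card - A.card) * f (A.map (e b))
        = ∑ A ∈ S.attach.powerset,
            ((-1 : ℝ) ^ (S.attach.card - A.card)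
                * f ((A.filter fun i => b i = false).map (e fun _ => false))
              + (-1 : ℝ) ^ (S.attach.card - A.card)
                * f ((A.filter fun i => b i = true).map (e fun _ => true))) := by
          refine Finset.sum_congr rfl fun A _ => ?_
          rw [hsplit b A, mul_add]
      _ = (∑ A ∈ S.attach.powerset, (-1 : ℝ) ^ (S.attach.card - A.card)
              * f ((A.filter fun i => b i = false).map (e fun _ => false)))
          + ∑ A ∈ S.attach.powerset, (-1 : ℝ) ^ (S.attach.card - A.card)
              * f ((A.filter fun i => b i = true).map (e fun _ => true)) :=
        Finset.sum_add_distrib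
      _ = _ := by
        rw [aux_vanish_filter S.attach (fun i => b i = false)
            (fun B => f (B.map (e fun _ => false))),
          aux_vanish_filter S.attach (fun i => b i = true)
            (fun B => f (B.map (e fun _ => true))),
          hind b false, hind b true]
  -- conclude
  calc ∑ b : {x // x ∈ S} → Bool,
        D (S.attach.image fun i : {x // x ∈ S} => (i.1, b i))
      = ∑ b : {x // x ∈ S} → Bool, D (S.attach.map (e b)) := by
        exact Finset.sum_congr rfl fun b _ => by rw [himg b]
    _ = ∑ b : {x // x ∈ S} → Bool,
          ((if b = (fun _ => false) then D (S.attach.map (e fun _ => false)) else 0)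
            + (if b = (fun _ => true) then D (S.attach.map (e fun _ => true)) else 0)) :=
        Finset.sum_congr rfl fun b _ => hDb b
    _ = D (S.attach.map (e fun _ => false)) + D (S.attach.map (e fun _ => true)) := by
        rw [Finset.sum_add_distrib]
        congr 1 <;> simp [Finset.sum_ite_eq']
    _ = D (S.image fun i => (i, false)) + D (S.image fun i => (i, true)) := by
        rw [himgc false, himgc true]
end

section
/- The Catalan numbers satisfy the asymptotic C_n ∼ 4^n / (n^{3/2} √π); precisely, the sequence n ↦ (C_n · √π · n^{3/2}) / 4^n tends to 1 as n → ∞. -/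
open Filter

open Real Stirling in
private lemma centralBinom_stirling (n : ℕ) (hn : 1 ≤ n) :
    (Nat.centralBinom n : ℝ) = stirlingSeq (2 * n) / (stirlingSeq n) ^ 2 * (4 ^ n / Real.sqrt n) := by
  have hn0 : (0:ℝ) < n := by exact_mod_cast hn
  have he : (0:ℝ) < Real.exp 1 := Real.exp_pos 1
  have hkey : Nat.centralBinom n * n.factorial * n.factorial = (2*n).factorial := by
    have := Nat.choose_mul_factorial_mul_factorial (Nat.le_mul_of_pos_left n two_pos)
    simpa [Nat.centralBinom, Nat.two_mul, Nat.add_sub_cancel] using this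
  have hfact : (Nat.centralBinom n : ℝ) = (2*n).factorial / (n.factorial * n.factorial) := by
    rw [eq_div_iff (by positivity)]
    push_cast [← hkey]; ring
  have hs : stirlingSeq n = n.factorial / (Real.sqrt (2*n) * ((n:ℝ)/Real.exp 1)^n) := rfl
  have hs2 : stirlingSeq (2*n) = (2*n).factorial / (Real.sqrt (2*(2*n:ℕ)) * (((2*n:ℕ):ℝ)/Real.exp 1)^(2*n)) := rfl
  have hsq : Real.sqrt (2*(2*n:ℕ)) = 2 * Real.sqrt n := by
    push_cast
    rw [show (2:ℝ)*(2*n) = 4 * n by ring, Real.sqrt_mul (by norm_num),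
      show (4:ℝ) = 2^2 by norm_num, Real.sqrt_sq (by norm_num)]
  have hpow : (((2*n:ℕ):ℝ)/Real.exp 1)^(2*n) = 4^n * ((n:ℝ)/Real.exp 1)^(2*n) := by
    push_cast
    rw [show (2*(n:ℝ))/Real.exp 1 = 2 * ((n:ℝ)/Real.exp 1) by ring, mul_pow, pow_mul]
    norm_num
  have hsn0 : Real.sqrt n ≠ 0 := by positivity
  have hq0 : ((n:ℝ)/Real.exp 1)^n ≠ 0 := by positivity
  rw [hfact, hs, hs2, hsq, hpow]
  have h2n : Real.sqrt (2*(n:ℝ)) ≠ 0 := by positivity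
  field_simp
  ring_nf
  rw [Real.sq_sqrt (by positivity : (0:ℝ) ≤ (n:ℝ)), Real.sq_sqrt (by positivity : (0:ℝ) ≤ (n:ℝ) * 2)]
  ring_nf

/-- Catalan number asymptotics: `C_n ∼ 4^n / (n^{3/2} √π)`, i.e.
`C_n · √π · n^{3/2} / 4^n → 1` as `n → ∞`. -/
theorem stmt6 :
    Tendsto (fun n : ℕ =>
        (catalan n : ℝ) * Real.sqrt Real.pi * (n : ℝ) ^ ((3 : ℝ) / 2) / 4 ^ n)
      atTop (nhds 1) := by
  have hπ : (0:ℝ) < Real.sqrt Real.pi := Real.sqrt_pos.2 Real.pi_pos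
  have h2 : Tendsto (fun n : ℕ => 2 * n) atTop atTop :=
    tendsto_atTop_atTop_of_monotone (fun a b h => by omega) (fun b => ⟨b, by omega⟩)
  have hS : Tendsto (fun n : ℕ => Stirling.stirlingSeq (2 * n) / (Stirling.stirlingSeq n) ^ 2)
      atTop (nhds (Real.sqrt Real.pi / (Real.sqrt Real.pi) ^ 2)) :=
    (Stirling.tendsto_stirlingSeq_sqrt_pi.comp h2).div
      (Stirling.tendsto_stirlingSeq_sqrt_pi.pow 2) (by positivity)
  have hN : Tendsto (fun n : ℕ => (n : ℝ) / ((n : ℝ) + 1)) atTop (nhds 1) :=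
    tendsto_natCast_div_add_atTop 1
  have hlim : Tendsto (fun n : ℕ => Real.sqrt Real.pi *
      (Stirling.stirlingSeq (2 * n) / (Stirling.stirlingSeq n) ^ 2) * ((n : ℝ) / ((n : ℝ) + 1)))
      atTop (nhds 1) := by
    have := ((hS.const_mul (Real.sqrt Real.pi)).mul hN)
    have heq : Real.sqrt Real.pi * (Real.sqrt Real.pi / (Real.sqrt Real.pi) ^ 2) * 1 = 1 := by
      field_simp
    rwa [heq] at this
  refine hlim.congr' ?_
  filter_upwards [eventually_ge_atTop 1] with n hn
  have hn0 : (0:ℝ) < n := by exact_mod_cast hn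
  have hc : (catalan n : ℝ) = (Nat.centralBinom n : ℝ) / ((n : ℝ) + 1) := by
    rw [eq_div_iff (by positivity)]
    have := succ_mul_catalan_eq_centralBinom n
    push_cast [← this]; ring
  have hr : (n : ℝ) ^ ((3 : ℝ) / 2) = (n : ℝ) * Real.sqrt n := by
    rw [show (3:ℝ)/2 = 1 + 1/2 by norm_num, Real.rpow_add hn0, Real.rpow_one,
      Real.sqrt_eq_rpow]
  rw [hc, hr, centralBinom_stirling n hn]
  have hsn : Real.sqrt (n:ℝ) ≠ 0 := by positivity
  have h4 : (4:ℝ)^n ≠ 0 := by positivity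
  have hst : Stirling.stirlingSeq n ≠ 0 := by
    have : (0:ℝ) < Stirling.stirlingSeq n := by
      unfold Stirling.stirlingSeq
      have h1 : (0:ℝ) < (Nat.factorial n : ℝ) := by positivity
      positivity
    exact ne_of_gt this
  field_simp
end

section
/- In the Dyck-word circuit at p = 1/2, the probability that two boundary sites at odd distance x = 2n − 1 are entangled equals 2^{−(2n−1)} · C_n, and this probability scales as x^{−3/2}: precisely, the sequence n ↦ (2n − 1)^{3/2} · 2^{−(2n−1)} · C_n tends to 2^{5/2}/√π as n → ∞. -/
open Filter
open Real Stirling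

lemma key (n : ℕ) (hn : 0 < n) :
    stirlingSeq (2 * n) / (stirlingSeq n) ^ 2
      = (Nat.centralBinom n : ℝ) * Real.sqrt n / 4 ^ n := by
  have hfn : Nat.centralBinom n * n.factorial * n.factorial = (2 * n).factorial := by
    have := Nat.choose_mul_factorial_mul_factorial (n := 2 * n) (k := n) (by omega)
    simpa [Nat.centralBinom, two_mul, Nat.add_sub_cancel] using this
  have hf : ((2 * n).factorial : ℝ) = (Nat.centralBinom n : ℝ) * n.factorial * n.factorial := by
    rw [← hfn]; push_cast; ring
  have hs4 : Real.sqrt (2 * ((2 * n : ℕ) : ℝ)) = 2 * Real.sqrt n := by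
    push_cast
    rw [show (2 : ℝ) * (2 * n) = 2 ^ 2 * n by ring,
      Real.sqrt_mul (by positivity), Real.sqrt_sq (by norm_num)]
  have hsn : Real.sqrt (2 * (n:ℝ)) = Real.sqrt 2 * Real.sqrt n :=
    Real.sqrt_mul (by norm_num) _
  have hp : ((2 * n : ℕ) : ℝ) / Real.exp 1 = 2 * ((n : ℝ) / Real.exp 1) := by
    push_cast; ring
  have hn' : (0:ℝ) < n := by exact_mod_cast hn
  have hsq : Real.sqrt (n:ℝ) ^ 2 = n := Real.sq_sqrt hn'.le
  have hsqp : (0:ℝ) < Real.sqrt n := Real.sqrt_pos.mpr hn'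
  have hs2 : Real.sqrt 2 ^ 2 = 2 := Real.sq_sqrt (by norm_num)
  have hs2' : (0:ℝ) < Real.sqrt 2 := Real.sqrt_pos.mpr (by norm_num)
  have hfac : (0:ℝ) < n.factorial := by exact_mod_cast n.factorial_pos
  have hXp : (0:ℝ) < ((n:ℝ) / Real.exp 1) ^ n := by positivity
  rw [stirlingSeq, stirlingSeq, hf, hs4, hp, hsn, mul_pow (2 : ℝ),
    show (2:ℝ)^(2*n) = 4^n from by rw [pow_mul]; norm_num,
    show ((n:ℝ)/Real.exp 1)^(2*n) = (((n:ℝ)/Real.exp 1)^n)^2 from by rw [← pow_mul, mul_comm]]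
  generalize hX : ((n:ℝ) / Real.exp 1) ^ n = X at *
  have : X ≠ 0 := hXp.ne'
  field_simp
  linear_combination (↑n.centralBinom : ℝ) * hs2

/-- In the Dyck-word circuit at `p = 1/2` the entanglement probability of two
sites at distance `x = 2n − 1` is `2^{−(2n−1)} C_n`, and it scales as
`x^{−3/2}`: `(2n−1)^{3/2} · 2^{−(2n−1)} · C_n → 2^{5/2}/√π`. -/
theorem stmt7 :
    Tendsto (fun n : ℕ =>
        (2 * (n : ℝ) - 1) ^ ((3 : ℝ) / 2)
          * (2 : ℝ) ^ (-(2 * (n : ℝ) - 1)) * (catalan n : ℝ))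
      atTop (nhds ((2 : ℝ) ^ ((5 : ℝ) / 2) / Real.sqrt Real.pi)) := by
  have hπ : (0:ℝ) < Real.sqrt π := Real.sqrt_pos.mpr Real.pi_pos
  have h2n : Tendsto (fun n : ℕ => 2 * n) atTop atTop :=
    tendsto_atTop_atTop.mpr fun b => ⟨b, fun a ha => by omega⟩
  have h1 : Tendsto (fun n : ℕ => stirlingSeq (2 * n) / stirlingSeq n ^ 2) atTop
      (nhds (Real.sqrt π / Real.sqrt π ^ 2)) :=
    (tendsto_stirlingSeq_sqrt_pi.comp h2n).div (tendsto_stirlingSeq_sqrt_pi.pow 2)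
      (by positivity)
  have h2 : Tendsto (fun n : ℕ => (2 - 1 / (n:ℝ)) ^ ((3:ℝ)/2)) atTop
      (nhds ((2:ℝ) ^ ((3:ℝ)/2))) :=
    by
      have hbase : Tendsto (fun n : ℕ => 2 - 1/(n:ℝ)) atTop (nhds 2) := by
        simpa using tendsto_const_nhds.sub (tendsto_one_div_atTop_nhds_zero_nat : Tendsto (fun n : ℕ => 1 / (n:ℝ)) atTop (nhds 0))
      exact hbase.rpow_const (Or.inr (by norm_num))
  have h3 : Tendsto (fun n : ℕ => (n:ℝ) / (n + 1)) atTop (nhds 1) :=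
    tendsto_natCast_div_add_atTop (1:ℝ)
  have hall : Tendsto (fun n : ℕ =>
      2 * (stirlingSeq (2 * n) / stirlingSeq n ^ 2)
        * ((2 - 1 / (n:ℝ)) ^ ((3:ℝ)/2) * ((n:ℝ) / (n + 1)))) atTop
      (nhds (2 * (Real.sqrt π / Real.sqrt π ^ 2) * ((2:ℝ) ^ ((3:ℝ)/2) * 1))) :=
    ((tendsto_const_nhds.mul h1)).mul (h2.mul h3)
  have hconst : 2 * (Real.sqrt π / Real.sqrt π ^ 2) * ((2:ℝ) ^ ((3:ℝ)/2) * 1)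
      = (2 : ℝ) ^ ((5 : ℝ) / 2) / Real.sqrt π := by
    rw [show ((5:ℝ)/2) = 1 + 3/2 by norm_num, Real.rpow_add two_pos, Real.rpow_one,
      Real.sq_sqrt Real.pi_pos.le]
    field_simp
    linear_combination Real.sq_sqrt Real.pi_pos.le
  rw [← hconst]
  refine Tendsto.congr' ?_ hall
  filter_upwards [eventually_ge_atTop 1] with n hn
  have hn' : (0:ℝ) < n := by exact_mod_cast hn
  have hsq : (0:ℝ) < Real.sqrt n := Real.sqrt_pos.mpr hn'
  have hkey := key n hn
  have hcat : (catalan n : ℝ) = (Nat.centralBinom n : ℝ) / (n + 1) := by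
    have := succ_mul_catalan_eq_centralBinom n
    have h' : ((n:ℝ) + 1) * (catalan n : ℝ) = (Nat.centralBinom n : ℝ) := by
      exact_mod_cast this
    field_simp [← h']
    linear_combination h'
  have hpow : (2 : ℝ) ^ (-(2 * (n:ℝ) - 1)) = 2 / 4 ^ n := by
    rw [Real.rpow_neg (by norm_num), show (2 * (n:ℝ) - 1) = (2*n:ℕ) - 1 by push_cast; ring,
      Real.rpow_sub two_pos, Real.rpow_one, Real.rpow_natCast, pow_mul]
    norm_num
  have hfac : (2 * (n:ℝ) - 1) ^ ((3:ℝ)/2)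
      = (2 - 1/(n:ℝ)) ^ ((3:ℝ)/2) * ((n:ℝ) * Real.sqrt n) := by
    have h21 : (0:ℝ) ≤ 2 - 1/(n:ℝ) := by
      rw [sub_nonneg, div_le_iff₀ hn']
      nlinarith [(by exact_mod_cast hn : (1:ℝ) ≤ n)]
    rw [show (2 * (n:ℝ) - 1) = (2 - 1/(n:ℝ)) * n by field_simp,
      Real.mul_rpow h21 hn'.le,
      show ((3:ℝ)/2) = 1 + 1/2 by norm_num, Real.rpow_add hn', Real.rpow_one,
      ← Real.sqrt_eq_rpow]
  rw [hkey, hcat, hpow, hfac]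
  have h4 : (0:ℝ) < 4 ^ n := by positivity
  field_simp
end

section
/- Let (Ω, μ) be a probability space, let k ≥ 2 be a natural number, let γ be a real number, and let p₀ > 0. Suppose that for every vector of positive-integer gaps g : Fin (k−1) → ℕ+ there is a measurable set A(g) ⊆ Ω, that the sets A(g) are pairwise disjoint for distinct g, and that μ(A(g)) ≥ p₀ · ∏_{j} (g(j))^{−γ} for every g. Then γ > 1. -/
open MeasureTheory

/-- Entanglement monogamy forces the decay exponent to exceed `1`:
if pairwise disjoint events indexed by gap vectors `g : Fin (k−1) → ℕ+` have
probabilities bounded below by `p₀ ∏ g(j)^{−γ}`, then `γ > 1`. -/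
theorem stmt8 {Ω : Type*} [MeasurableSpace Ω] (μ : Measure Ω)
    [IsProbabilityMeasure μ]
    (k : ℕ) (hk : 2 ≤ k) (γ : ℝ) (p₀ : ℝ) (hp₀ : 0 < p₀)
    (A : (Fin (k - 1) → ℕ+) → Set Ω)
    (hmeas : ∀ g, MeasurableSet (A g))
    (hdisj : Pairwise fun g g' => Disjoint (A g) (A g'))
    (hlb : ∀ g, p₀ * ∏ j, ((g j : ℕ) : ℝ) ^ (-γ) ≤ (μ (A g)).toReal) :
    1 < γ := by
  by_contra hγ
  push_neg at hγ
  -- finite-sum bound from disjointness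
  have hS : ∀ S : Finset (Fin (k - 1) → ℕ+),
      ∑ g ∈ S, ∏ j, ((g j : ℕ) : ℝ) ^ (-γ) ≤ 1 / p₀ := by
    intro S
    rw [le_div_iff₀ hp₀, Finset.sum_mul]
    have h1 : ∑ g ∈ S, p₀ * ∏ j, ((g j : ℕ) : ℝ) ^ (-γ) ≤ 1 := by
      calc ∑ g ∈ S, p₀ * ∏ j, ((g j : ℕ) : ℝ) ^ (-γ)
          ≤ ∑ g ∈ S, (μ (A g)).toReal := Finset.sum_le_sum fun g _ => hlb g
        _ = (∑ g ∈ S, μ (A g)).toReal :=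
            (ENNReal.toReal_sum fun g _ => measure_ne_top μ _).symm
        _ = (μ (⋃ g ∈ S, A g)).toReal := by
            rw [measure_biUnion_finset (fun g _ g' _ h => hdisj h) fun g _ => hmeas g]
        _ ≤ (μ Set.univ).toReal :=
            ENNReal.toReal_mono (measure_ne_top μ _) (measure_mono (Set.subset_univ _))
        _ = 1 := by simp
    calc ∑ g ∈ S, (∏ j, ((g j : ℕ) : ℝ) ^ (-γ)) * p₀
        = ∑ g ∈ S, p₀ * ∏ j, ((g j : ℕ) : ℝ) ^ (-γ) := by
          simp [mul_comm]
      _ ≤ 1 := h1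
  -- the harmonic-type sum
  set H : ℕ → ℝ := fun N => ∑ i ∈ Finset.range N, (((i.succPNat : ℕ+) : ℕ) : ℝ) ^ (-γ)
    with hH
  have hHbound : ∀ N, H N ≤ 1 / p₀ := by
    intro N
    let e : ℕ ↪ ℕ+ := ⟨Nat.succPNat, Nat.succPNat_injective⟩
    have key := hS (Fintype.piFinset fun _ : Fin (k - 1) => (Finset.range N).map e)
    have hfac : (∏ j : Fin (k - 1), ∑ n ∈ (Finset.range N).map e, ((n : ℕ) : ℝ) ^ (-γ))
        = ∑ g ∈ Fintype.piFinset (fun _ : Fin (k - 1) => (Finset.range N).map e),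
          ∏ j : Fin (k - 1), ((g j : ℕ) : ℝ) ^ (-γ) := Finset.prod_univ_sum _ _
    rw [← hfac] at key
    have hsum : ∀ j : Fin (k - 1),
        ∑ n ∈ (Finset.range N).map e, ((n : ℕ) : ℝ) ^ (-γ) = H N := by
      intro j
      rw [Finset.sum_map]
      simp only [e, Function.Embedding.coeFn_mk]
      rfl
    rw [Finset.prod_congr rfl (fun j _ => hsum j), Finset.prod_const,
      Finset.card_univ, Fintype.card_fin] at key
    have hk1 : k - 1 ≠ 0 := by omega
    have hH1 : (1 : ℝ) ≤ H N ∨ N = 0 := by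
      rcases Nat.eq_zero_or_pos N with h | h
      · exact Or.inr h
      · left
        have : (1:ℝ) = (((Nat.succPNat 0 : ℕ+) : ℕ) : ℝ) ^ (-γ) := by
          simp
        rw [this]
        refine Finset.single_le_sum (f := fun i => (((i.succPNat : ℕ+) : ℕ) : ℝ) ^ (-γ))
          (fun i _ => ?_) (Finset.mem_range.mpr h)
        positivity
    rcases hH1 with h1 | h0
    · exact le_trans (le_self_pow₀ h1 hk1) key
    · subst h0
      simp only [hH, Finset.range_zero, Finset.sum_empty]
      positivity
  -- but H N ≥ harmonic sum which diverges
  have hge : ∀ N, ∑ i ∈ Finset.range N, (1 / (i + 1) : ℝ) ≤ H N := by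
    intro N
    apply Finset.sum_le_sum
    intro i _
    have h1 : (1 : ℝ) ≤ (i + 1 : ℝ) := by
      have h := (Nat.cast_nonneg i : (0:ℝ) ≤ i)
      linarith
    have : ((i + 1 : ℝ)) ^ (-1 : ℝ) ≤ ((i + 1 : ℝ)) ^ (-γ) :=
      Real.rpow_le_rpow_of_exponent_le h1 (by linarith)
    rw [Real.rpow_neg_one] at this
    simpa [Nat.succPNat, one_div] using this
  have hdiv := Real.tendsto_sum_range_one_div_nat_succ_atTop
  obtain ⟨N, hN⟩ := (Filter.tendsto_atTop.mp hdiv (1 / p₀ + 1)).exists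
  have := le_trans (hge N) (hHbound N)
  have hpush : (1 / p₀ + 1 : ℝ) ≤ ∑ i ∈ Finset.range N, (1 / (i + 1) : ℝ) := by
    simpa using hN
  linarith
end
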